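/- arXiv:2107.01874 — 2 statements merged into one kernel-verified Lean document; each statement's English description precedes it below -/
import Mathlib

section
/- Let F be a field. Let σ₁, σ₂ ∈ SL₃(F) be the matrices σ₁ = [[0,1,0],[-1,0,0],[0,0,1]] and σ₂ = [[1,0,0],[0,0,-1],[0,1,0]], and let P₂,₁(F) = {g ∈ SL₃(F) : g₃₁ = g₃₂ = 0} and P₁,₂(F) = {g ∈ SL₃(F) : g₂₁ = g₃₁ = 0}. Then P₂,₁(F)·σ₁σ₂·P₁,₂(F) = {g ∈ SL₃(F) : g₃₁ = 0}; that is, a matrix g ∈ SL₃(F) satisfies g₃₁ = 0 if and only if g = p·σ₁σ₂·q for some p ∈ P₂,₁(F) and q ∈ P₁,₂(F). -/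
open Matrix

/-- The Weyl element `σ₁ ∈ SL₃(F)`. -/
def sigma1 (F : Type*) [Field F] : Matrix.SpecialLinearGroup (Fin 3) F :=
  ⟨!![0, 1, 0; -1, 0, 0; 0, 0, 1], by simp [Matrix.det_fin_three]⟩

/-- The Weyl element `σ₂ ∈ SL₃(F)`. -/
def sigma2 (F : Type*) [Field F] : Matrix.SpecialLinearGroup (Fin 3) F :=
  ⟨!![1, 0, 0; 0, 0, -1; 0, 1, 0], by simp [Matrix.det_fin_three]⟩

/-- The maximal parabolic subgroup `P₂,₁(F) = {g ∈ SL₃(F) : g₃₁ = g₃₂ = 0}`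
(block upper-triangular of shape `(2,1)`), as a set. -/
def P21 (F : Type*) [Field F] : Set (Matrix.SpecialLinearGroup (Fin 3) F) :=
  {g | g.val 2 0 = 0 ∧ g.val 2 1 = 0}

/-- The maximal parabolic subgroup `P₁,₂(F) = {g ∈ SL₃(F) : g₂₁ = g₃₁ = 0}`
(block upper-triangular of shape `(1,2)`), as a set. -/
def P12 (F : Type*) [Field F] : Set (Matrix.SpecialLinearGroup (Fin 3) F) :=
  {g | g.val 1 0 = 0 ∧ g.val 2 0 = 0}

set_option maxHeartbeats 1000000 in
/-- `P₂,₁(F)·σ₁σ₂·P₁,₂(F) = {g ∈ SL₃(F) : g₃₁ = 0}`: a matrix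
`g ∈ SL₃(F)` has vanishing `(3,1)` entry iff `g = p·σ₁σ₂·q` with `p ∈ P₂,₁(F)`
and `q ∈ P₁,₂(F)`. -/
theorem parabolic_product_description (F : Type*) [Field F] :
    ∀ g : Matrix.SpecialLinearGroup (Fin 3) F,
      g.val 2 0 = 0 ↔ ∃ p ∈ P21 F, ∃ q ∈ P12 F, g = p * (sigma1 F * sigma2 F) * q := by
  intro g
  constructor
  · intro hg
    by_cases hd : g.val 1 0 ≠ 0
    · set d := g.val 1 0 with hd'
      set a := g.val 0 0 with ha'
      have hpdet : (!![1,-a,0;0,-d,0;0,0,-d⁻¹] : Matrix (Fin 3) (Fin 3) F).det = 1 := by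
        simp [Matrix.det_fin_three]; field_simp
      have hNdet : (!![0, d⁻¹, 0; 0, 0, -d; -1, a*d⁻¹, 0] : Matrix (Fin 3) (Fin 3) F).det = 1 := by
        simp [Matrix.det_fin_three]; field_simp
      set p : Matrix.SpecialLinearGroup (Fin 3) F := ⟨_, hpdet⟩ with hp'
      set N : Matrix.SpecialLinearGroup (Fin 3) F := ⟨_, hNdet⟩ with hN'
      have key : p * (sigma1 F * sigma2 F) * N = 1 := by
        apply Subtype.ext
        show (!![1,-a,0;0,-d,0;0,0,-d⁻¹] * (!![0,1,0;-1,0,0;0,0,1] * !![1,0,0;0,0,-1;0,1,0])) *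
          !![0, d⁻¹, 0; 0, 0, -d; -1, a*d⁻¹, 0] = (1 : Matrix (Fin 3) (Fin 3) F)
        rw [Matrix.one_fin_three]
        simp only [Matrix.mul_fin_three]
        ext i j
        fin_cases i <;> fin_cases j <;> simp <;> field_simp
      refine ⟨p, ⟨rfl, rfl⟩, N * g, ⟨?_, ?_⟩, ?_⟩
      · show (!![0, d⁻¹, 0; 0, 0, -d; -1, a*d⁻¹, 0] * g.val) 1 0 = 0
        simp [Matrix.mul_apply, Fin.sum_univ_three, hg]
      · show (!![0, d⁻¹, 0; 0, 0, -d; -1, a*d⁻¹, 0] * g.val) 2 0 = 0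
        simp [Matrix.mul_apply, Fin.sum_univ_three]
        field_simp
        rw [ha', hd']; ring
      · calc g = 1 * g := by rw [one_mul]
        _ = _ := by rw [← key]; group
    · push_neg at hd
      have ha : g.val 0 0 ≠ 0 := by
        intro ha
        have hdet := g.property
        rw [Matrix.det_fin_three] at hdet
        rw [ha, hd, hg] at hdet
        simp at hdet
      set a := g.val 0 0 with ha'
      have hpdet : (!![0,-a,0;1,0,0;0,0,a⁻¹] : Matrix (Fin 3) (Fin 3) F).det = 1 := by
        simp [Matrix.det_fin_three]; field_simp
      have hNdet : (!![a⁻¹,0,0;0,0,a;0,-1,0] : Matrix (Fin 3) (Fin 3) F).det = 1 := by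
        simp [Matrix.det_fin_three]; field_simp
      set p : Matrix.SpecialLinearGroup (Fin 3) F := ⟨_, hpdet⟩ with hp'
      set N : Matrix.SpecialLinearGroup (Fin 3) F := ⟨_, hNdet⟩ with hN'
      have key : p * (sigma1 F * sigma2 F) * N = 1 := by
        apply Subtype.ext
        show (!![0,-a,0;1,0,0;0,0,a⁻¹] * (!![0,1,0;-1,0,0;0,0,1] * !![1,0,0;0,0,-1;0,1,0])) *
          !![a⁻¹,0,0;0,0,a;0,-1,0] = (1 : Matrix (Fin 3) (Fin 3) F)
        rw [Matrix.one_fin_three]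
        simp only [Matrix.mul_fin_three]
        ext i j
        fin_cases i <;> fin_cases j <;> simp <;> field_simp
      refine ⟨p, ⟨rfl, rfl⟩, N * g, ⟨?_, ?_⟩, ?_⟩
      · show (!![a⁻¹,0,0;0,0,a;0,-1,0] * g.val) 1 0 = 0
        simp [Matrix.mul_apply, Fin.sum_univ_three, hg]
      · show (!![a⁻¹,0,0;0,0,a;0,-1,0] * g.val) 2 0 = 0
        simp [Matrix.mul_apply, Fin.sum_univ_three, hd]
      · calc g = 1 * g := by rw [one_mul]
        _ = _ := by rw [← key]; group
  · rintro ⟨p, ⟨hp1, hp2⟩, q, ⟨hq1, hq2⟩, rfl⟩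
    have hcoe : (p * (sigma1 F * sigma2 F) * q).val
        = p.val * ((sigma1 F).val * (sigma2 F).val) * q.val := rfl
    rw [hcoe]
    simp [sigma1, sigma2, Matrix.mul_apply, Fin.sum_univ_three, hp1, hp2, hq1, hq2]
end

section
/- Let n > 2 be an integer and R a commutative ring. For 1 ≤ j ≤ n−1 let σⱼ ∈ SLₙ(R) be the matrix which agrees with the identity matrix except in rows j and j+1, where row j equals −e_{j+1} and row j+1 equals e_j (e_i the i-th standard basis row vector), and set γ₁ = σ₁σ₂⋯σ_{n−1}. Let Bₙ(R) ≤ SLₙ(R) be the group of upper-triangular matrices, let P'(R) = {g ∈ SLₙ(R) : g_{ij} = 0 whenever i ≥ 3 and j ≤ 2, and g_{ij} = 0 whenever i > j ≥ 3} (block upper-triangular with an invertible 2×2 block in the upper left and an upper-triangular (n−2)×(n−2) block in the lower right), and let H(R) = {g ∈ SLₙ(R) : g_{ij} = 0 whenever i > j and j ≤ n−2} (block upper-triangular with an upper-triangular (n−2)×(n−2) block in the upper left and an invertible 2×2 block in the lower right). Then Bₙ(R)·γ₁·Bₙ(R) ⊆ P'(R)·γ₁·H(R) ⊆ {g ∈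 SLₙ(R) : g_{ij} = 0 whenever i > j + 1}. -/
open Matrix

/-- For `0 ≤ j`, the matrix `σⱼ₊₁` (in the 1-indexed numbering of the paper):
it agrees with the identity except in rows `j` and `j+1` (0-indexed), where
row `j` equals `−e_{j+1}` and row `j+1` equals `e_j`. -/
def sigmaMat (n : ℕ) (R : Type*) [CommRing R] (j : ℕ) : Matrix (Fin n) (Fin n) R :=
  Matrix.of fun i k =>
    if (i : ℕ) = j then (if (k : ℕ) = j + 1 then -1 else 0)
    else if (i : ℕ) = j + 1 then (if (k : ℕ) = j then 1 else 0)
    else if i = k then 1 else 0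

/-- The Coxeter element `γ₁ = σ₁σ₂⋯σ_{n−1}`. -/
def gammaOne (n : ℕ) (R : Type*) [CommRing R] : Matrix (Fin n) (Fin n) R :=
  ((List.range (n - 1)).map (sigmaMat n R)).prod

/-- The Borel subgroup `Bₙ(R)` of upper-triangular matrices in `SLₙ(R)`. -/
def BorelSet (n : ℕ) (R : Type*) [CommRing R] : Set (Matrix (Fin n) (Fin n) R) :=
  {g | g.det = 1 ∧ ∀ i j : Fin n, (j : ℕ) < (i : ℕ) → g i j = 0}

/-- The parabolic subgroup `P'(R) ≤ SLₙ(R)`: block upper-triangular with an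
invertible `2×2` block in the upper left and an upper-triangular
`(n−2)×(n−2)` block in the lower right.  (1-indexed conditions
`g_{ij} = 0` for `i ≥ 3, j ≤ 2` and for `i > j ≥ 3` become, 0-indexed,
`i ≥ 2, j ≤ 1` and `i > j ≥ 2`.) -/
def PprimeSet (n : ℕ) (R : Type*) [CommRing R] : Set (Matrix (Fin n) (Fin n) R) :=
  {g | g.det = 1 ∧
    (∀ i j : Fin n, 2 ≤ (i : ℕ) → (j : ℕ) ≤ 1 → g i j = 0) ∧
    (∀ i j : Fin n, (j : ℕ) < (i : ℕ) → 2 ≤ (j : ℕ) → g i j = 0)}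

/-- The subgroup `H(R) ≤ SLₙ(R)`: block upper-triangular with an
upper-triangular `(n−2)×(n−2)` block in the upper left and an invertible `2×2`
block in the lower right.  (1-indexed condition `g_{ij} = 0` for `i > j` and
`j ≤ n−2` becomes, 0-indexed, `i > j` and `j ≤ n−3`.) -/
def Hset (n : ℕ) (R : Type*) [CommRing R] : Set (Matrix (Fin n) (Fin n) R) :=
  {g | g.det = 1 ∧ ∀ i j : Fin n, (j : ℕ) < (i : ℕ) → (j : ℕ) ≤ n - 3 → g i j = 0}

/-- The upper Hessenberg matrices of determinant one:
`{g ∈ SLₙ(R) : g_{ij} = 0 whenever i > j + 1}`. -/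
def HessSet (n : ℕ) (R : Type*) [CommRing R] : Set (Matrix (Fin n) (Fin n) R) :=
  {g | g.det = 1 ∧ ∀ i j : Fin n, (j : ℕ) + 1 < (i : ℕ) → g i j = 0}


section Aux

private lemma det_sigmaMat {n : ℕ} (R : Type*) [CommRing R] {j : ℕ} (hj : j + 1 < n) :
    (sigmaMat n R j).det = 1 := by
  have hj0 : j < n := by omega
  have hab : (⟨j, hj0⟩ : Fin n) ≠ ⟨j + 1, hj⟩ := by simp [Fin.ext_iff]
  have key : sigmaMat n R j =
      Matrix.updateRow ((1 : Matrix (Fin n) (Fin n) R).submatrix (Equiv.swap ⟨j, hj0⟩ ⟨j+1, hj⟩) id)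
        ⟨j, hj0⟩
        ((-1 : R) • ((1 : Matrix (Fin n) (Fin n) R).submatrix
          (Equiv.swap ⟨j, hj0⟩ ⟨j+1, hj⟩) id ⟨j, hj0⟩)) := by
    ext i k
    have hik := i.isLt
    have hkk := k.isLt
    simp only [sigmaMat, Matrix.of_apply, Matrix.updateRow_apply, Matrix.submatrix_apply,
      Pi.smul_apply, smul_eq_mul, Matrix.one_apply, id_eq, Equiv.swap_apply_def, Fin.ext_iff,
      Fin.val_mk]
    split_ifs <;> (try simp only [Fin.val_mk] at *) <;> first | rfl | (exfalso; omega) | norm_num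
  rw [key, Matrix.det_updateRow_smul, Matrix.updateRow_eq_self, Matrix.det_permute, Matrix.det_one,
    Equiv.Perm.sign_swap hab]
  norm_num

private lemma det_listProd {n : ℕ} {R : Type*} [CommRing R] :
    ∀ L : List (Matrix (Fin n) (Fin n) R), (∀ A ∈ L, A.det = 1) → L.prod.det = 1
  | [], _ => by simp
  | (A :: L), h => by
      rw [List.prod_cons, Matrix.det_mul, h A List.mem_cons_self,
        det_listProd L (fun B hB => h B (List.mem_cons_of_mem _ hB)), one_mul]

private lemma det_gammaOne (n : ℕ) (R : Type*) [CommRing R] : (gammaOne n R).det = 1 := by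
  refine det_listProd _ fun A hA => ?_
  simp only [List.mem_map, List.mem_range] at hA
  obtain ⟨j, hj, rfl⟩ := hA
  exact det_sigmaMat (j := j) R (by omega)

private lemma sum_pick {n : ℕ} {R : Type*} [CommRing R] {c : ℕ} (hc : c < n) (v : R)
    (f : Fin n → R) :
    (∑ l : Fin n, (if (l : ℕ) = c then v else 0) * f l) = v * f ⟨c, hc⟩ := by
  rw [Finset.sum_eq_single_of_mem (⟨c, hc⟩ : Fin n) (Finset.mem_univ _)]
  · rw [if_pos rfl]
  · intro b _ hb
    rw [if_neg (fun h => hb (Fin.ext h)), zero_mul]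

private lemma prodSigma_apply {n : ℕ} (R : Type*) [CommRing R] (m : ℕ) :
    ∀ (_ : m < n) (i k : Fin n),
    ((List.range m).map (sigmaMat n R)).prod i k =
      if (i : ℕ) = 0 ∧ 0 < m then (if (k : ℕ) = m then (-1 : R) ^ m else 0)
      else if (i : ℕ) ≤ m ∧ 0 < (i : ℕ) then (if (k : ℕ) + 1 = (i : ℕ) then 1 else 0)
      else if k = i then 1 else 0 := by
  induction m with
  | zero =>
      intro hm i k
      simp only [List.range_zero, List.map_nil, List.prod_nil, Matrix.one_apply, Fin.ext_iff]
      split_ifs <;> first | rfl | (exfalso; omega)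
  | succ m ih =>
      intro hm i k
      have hmn : m < n := by omega
      have hik := i.isLt
      have hkk := k.isLt
      have hprod : ((List.range (m + 1)).map (sigmaMat n R)).prod
          = ((List.range m).map (sigmaMat n R)).prod * sigmaMat n R m := by
        rw [List.range_succ, List.map_append, List.map_singleton, List.prod_append,
          List.prod_singleton]
      rw [hprod]
      by_cases hm0 : m = 0
      · subst hm0
        simp only [List.range_zero, List.map_nil, List.prod_nil, one_mul]
        simp only [sigmaMat, Matrix.of_apply, Fin.ext_iff]
        split_ifs <;> first | rfl | (exfalso; omega) | norm_num
      · have hm1 : 0 < m := by omega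
        rw [Matrix.mul_apply]
        by_cases hi0 : (i : ℕ) = 0
        · have hF : ∀ l : Fin n, ((List.range m).map (sigmaMat n R)).prod i l
              = (if (l : ℕ) = m then (-1 : R) ^ m else 0) := by
            intro l
            rw [ih hmn i l]
            simp only [Fin.ext_iff]
            split_ifs <;> first | rfl | (exfalso; omega)
          rw [Finset.sum_congr rfl (fun l _ => by rw [hF l]), sum_pick hmn]
          simp only [sigmaMat, Matrix.of_apply, Fin.val_mk, Fin.ext_iff]
          split_ifs <;> first | rfl | (exfalso; omega) | ring
        · by_cases him : (i : ℕ) ≤ m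
          · have hc : (i : ℕ) - 1 < n := by omega
            have hF : ∀ l : Fin n, ((List.range m).map (sigmaMat n R)).prod i l
                = (if (l : ℕ) = (i : ℕ) - 1 then (1 : R) else 0) := by
              intro l
              rw [ih hmn i l]
              simp only [Fin.ext_iff]
              split_ifs <;> first | rfl | (exfalso; omega)
            rw [Finset.sum_congr rfl (fun l _ => by rw [hF l]), sum_pick hc]
            simp only [sigmaMat, Matrix.of_apply, Fin.val_mk, Fin.ext_iff]
            split_ifs <;> first | rfl | (exfalso; omega) | norm_num
          · have hc : (i : ℕ) < n := i.isLt
            have hF : ∀ l : Fin n, ((List.range m).map (sigmaMat n R)).prod i l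
                = (if (l : ℕ) = (i : ℕ) then (1 : R) else 0) := by
              intro l
              rw [ih hmn i l]
              simp only [Fin.ext_iff]
              split_ifs <;> first | rfl | (exfalso; omega)
            rw [Finset.sum_congr rfl (fun l _ => by rw [hF l]), sum_pick hc]
            simp only [sigmaMat, Matrix.of_apply, Fin.val_mk, Fin.ext_iff]
            split_ifs <;> first | rfl | (exfalso; omega) | norm_num

private lemma gammaOne_eq_zero {n : ℕ} {R : Type*} [CommRing R] (hn : 2 < n) {i k : Fin n}
    (h : ¬((k : ℕ) + 1 = (i : ℕ) ∨ ((i : ℕ) = 0 ∧ (k : ℕ) = n - 1))) :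
    gammaOne n R i k = 0 := by
  have hik := i.isLt
  have hkk := k.isLt
  rw [gammaOne, prodSigma_apply R (n - 1) (by omega) i k]
  split_ifs <;> first | rfl | (exfalso; omega)

end Aux

/-- For `n > 2` and any commutative ring `R` one has
`Bₙ(R)·γ₁·Bₙ(R) ⊆ P'(R)·γ₁·H(R) ⊆ {g ∈ SLₙ(R) : g_{ij} = 0 for i > j + 1}`. -/
theorem coxeter_cell_inclusions (n : ℕ) (hn : 2 < n) (R : Type*) [CommRing R] :
    {x | ∃ b₁ ∈ BorelSet n R, ∃ b₂ ∈ BorelSet n R, x = b₁ * gammaOne n R * b₂} ⊆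
      {x | ∃ p ∈ PprimeSet n R, ∃ h ∈ Hset n R, x = p * gammaOne n R * h} ∧
    {x | ∃ p ∈ PprimeSet n R, ∃ h ∈ Hset n R, x = p * gammaOne n R * h} ⊆
      HessSet n R := by
  have hn3 : 3 ≤ n := hn
  constructor
  · rintro x ⟨b₁, hb₁, b₂, hb₂, rfl⟩
    refine ⟨b₁, ⟨hb₁.1, fun i j h2 h1 => hb₁.2 i j (by omega),
      fun i j hlt _ => hb₁.2 i j hlt⟩, b₂, ⟨hb₂.1, fun i j hlt _ => hb₂.2 i j hlt⟩, rfl⟩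
  · rintro x ⟨p, ⟨hpd, hp1, hp2⟩, h, ⟨hhd, hh⟩, rfl⟩
    constructor
    · rw [Matrix.det_mul, Matrix.det_mul, hpd, det_gammaOne, hhd]
      ring
    · intro i j hij
      have hii := i.isLt
      have hjj := j.isLt
      rw [Matrix.mul_apply]
      refine Finset.sum_eq_zero fun k _ => ?_
      rw [Matrix.mul_apply, Finset.sum_mul]
      refine Finset.sum_eq_zero fun l _ => ?_
      have hkk := k.isLt
      have hll := l.isLt
      have hi2 : 2 ≤ (i : ℕ) := by omega
      by_cases hl1 : (l : ℕ) ≤ 1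
      · rw [hp1 i l hi2 hl1, zero_mul, zero_mul]
      · by_cases hli : (l : ℕ) < (i : ℕ)
        · rw [hp2 i l hli (by omega), zero_mul, zero_mul]
        · by_cases hg : gammaOne n R l k = 0
          · rw [hg, mul_zero, zero_mul]
          · have hsupp : (k : ℕ) + 1 = (l : ℕ) ∨ ((l : ℕ) = 0 ∧ (k : ℕ) = n - 1) := by
              by_contra hc
              exact hg (gammaOne_eq_zero hn hc)
            have hkl : (k : ℕ) + 1 = (l : ℕ) := by
              rcases hsupp with h1 | h2
              · exact h1
              · omega
            rw [hh k j (by omega) (by omega), mul_zero]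
end
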